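/- The choice share map B ↦ π_j^w(B) in the brand ambassador problem is submodular: for all X ⊆ Y ⊆ A and a ∈ A \ Y, π_j^w(X∪{a}) - π_j^w(X) ≥ π_j^w(Y∪{a}) - π_j^w(Y). -/

import Mathlib

set_option maxHeartbeats 1000000

open Matrix

/-- `P(B)`: the rows of `P` indexed by the brand-ambassador set `B` are zeroed. -/
def ambP {n : ℕ} (P : Matrix (Fin n) (Fin n) ℝ) (B : Finset (Fin n)) :
    Matrix (Fin n) (Fin n) ℝ :=
  fun i k => if i ∈ B then 0 else P i k

/-- `q⁽ʲ⁾(B)`: entries indexed by `B` are set to 1 (ambassadors pick `j` surely). -/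
def ambQ {n m : ℕ} (q : Fin n → Fin m → ℝ) (j : Fin m) (B : Finset (Fin n)) :
    Fin n → ℝ :=
  fun k => if k ∈ B then 1 else q k j

/-- Choice share of `j` under endowment `w` with ambassador set `B`. -/
noncomputable def ambShare {n m : ℕ} (w : Fin n → ℝ) (P : Matrix (Fin n) (Fin n) ℝ)
    (q : Fin n → Fin m → ℝ) (j : Fin m) (B : Finset (Fin n)) : ℝ :=
  w ⬝ᵥ ((1 - ambP P B)⁻¹ *ᵥ ambQ q j B)

section Neumann

open Filter
open scoped ENNReal NNReal

attribute [local instance] Matrix.linftyOpNormedRing Matrix.linftyOpNormedAlgebra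

variable {n : ℕ}

private lemma amb_summable_norm_pow (hn : 0 < n) (P : Matrix (Fin n) (Fin n) ℝ)
    (hspec : ∀ μ ∈ spectrum ℂ (P.map (algebraMap ℝ ℂ)), ‖μ‖ < 1) :
    Summable fun k => ‖(P.map (algebraMap ℝ ℂ)) ^ k‖ := by
  haveI : NeZero n := ⟨hn.ne'⟩
  haveI : Nontrivial (Matrix (Fin n) (Fin n) ℂ) := inferInstance
  set A := P.map (algebraMap ℝ ℂ) with hA
  have hρ : spectralRadius ℂ A < 1 := by
    have := spectrum.spectralRadius_lt_of_forall_lt (a := A) (r := 1)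
      (fun z hz => by simpa [← NNReal.coe_lt_coe] using hspec z hz)
    simpa using this
  obtain ⟨r, hr1, hr2⟩ := exists_between hρ
  have hr2' : r ≠ ⊤ := (hr2.trans (by norm_num)).ne
  have hgel := spectrum.pow_nnnorm_pow_one_div_tendsto_nhds_spectralRadius A
  have hev : ∀ᶠ (k : ℕ) in atTop, (‖A ^ k‖₊ : ℝ≥0∞) ^ (1 / (k : ℝ)) < r :=
    hgel.eventually_lt_const hr1
  have hev2 : ∀ᶠ (k : ℕ) in atTop, ‖A ^ k‖ ≤ r.toReal ^ k := by
    filter_upwards [hev, eventually_gt_atTop 0] with k hk hk0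
    have hkne : (k : ℝ) ≠ 0 := Nat.cast_ne_zero.2 hk0.ne'
    have : ((‖A ^ k‖₊ : ℝ≥0∞) ^ (1 / (k:ℝ))) ^ (k : ℝ) ≤ r ^ (k : ℝ) :=
      ENNReal.rpow_le_rpow hk.le (by positivity)
    rw [← ENNReal.rpow_mul, one_div,
      inv_mul_cancel₀ hkne, ENNReal.rpow_one] at this
    have h2 := ENNReal.toReal_mono (by simp [ENNReal.rpow_eq_top_iff, hr2']) this
    rw [← ENNReal.toReal_rpow, Real.rpow_natCast] at h2
    simpa using h2
  have hgeom : Summable fun k : ℕ => r.toReal ^ k := by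
    apply summable_geometric_of_lt_one ENNReal.toReal_nonneg
    have h := ENNReal.toReal_strict_mono (by norm_num) hr2
    simpa using h
  exact Summable.of_norm_bounded_eventually_nat hgeom (by
    filter_upwards [hev2] with k hk; simpa using hk)

private lemma amb_entry_le_norm (M : Matrix (Fin n) (Fin n) ℂ) (i l : Fin n) :
    ‖M i l‖ ≤ ‖M‖ := by
  rw [Matrix.linfty_opNorm_def, ← coe_nnnorm]
  have h1 : ‖M i l‖₊ ≤ ∑ j, ‖M i j‖₊ :=
    Finset.single_le_sum (f := fun j => ‖M i j‖₊) (fun _ _ => zero_le) (Finset.mem_univ l)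
  exact_mod_cast h1.trans (Finset.le_sup (f := fun i => ∑ j, ‖M i j‖₊) (Finset.mem_univ i))

private lemma amb_pow_entry (A P : Matrix (Fin n) (Fin n) ℝ)
    (hA0 : ∀ i k, 0 ≤ A i k) (hAP : ∀ i k, A i k ≤ P i k) (hP : ∀ i k, 0 ≤ P i k) :
    ∀ (k : ℕ) i l, 0 ≤ (A ^ k) i l ∧ (A ^ k) i l ≤ (P ^ k) i l := by
  intro k
  induction k with
  | zero => intro i l; simp [Matrix.one_apply]; split <;> simp
  | succ k ih =>
    intro i l
    rw [pow_succ, pow_succ, Matrix.mul_apply, Matrix.mul_apply]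
    constructor
    · exact Finset.sum_nonneg fun t _ => mul_nonneg (ih i t).1 (hA0 t l)
    · exact Finset.sum_le_sum fun t _ => mul_le_mul (ih i t).2 (hAP t l) (hA0 t l)
        (le_trans (ih i t).1 (ih i t).2)

/-- Neumann-series facts about `(1 - A)⁻¹` for `0 ≤ A ≤ P` entrywise. -/
private lemma amb_neumann (P A : Matrix (Fin n) (Fin n) ℝ)
    (hP : ∀ i k, 0 ≤ P i k)
    (hspec : ∀ μ ∈ spectrum ℂ (P.map (algebraMap ℝ ℂ)), ‖μ‖ < 1)
    (hA0 : ∀ i k, 0 ≤ A i k) (hAP : ∀ i k, A i k ≤ P i k) :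
    ((1 - A) * (1 - A)⁻¹ = 1 ∧ (1 - A)⁻¹ * (1 - A) = 1) ∧
      ∀ i k, 0 ≤ (1 - A)⁻¹ i k := by
  rcases Nat.eq_zero_or_pos n with rfl | hn
  · exact ⟨⟨Subsingleton.elim _ _, Subsingleton.elim _ _⟩, fun i => i.elim0⟩
  have hnorm := amb_summable_norm_pow hn P hspec
  have hPk := amb_pow_entry A P hA0 hAP hP
  have hPbound : ∀ (k : ℕ) i l, (P ^ k) i l ≤ ‖(P.map (algebraMap ℝ ℂ)) ^ k‖ := by
    intro k i l
    have hmap : (P.map (algebraMap ℝ ℂ)) ^ k = (P ^ k).map (algebraMap ℝ ℂ) := by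
      rw [← RingHom.mapMatrix_apply, ← RingHom.mapMatrix_apply, map_pow]
    calc (P ^ k) i l ≤ ‖(P ^ k) i l‖ := le_abs_self _
      _ = ‖((P.map (algebraMap ℝ ℂ)) ^ k) i l‖ := by
          rw [hmap]; simp [Matrix.map_apply]
      _ ≤ _ := amb_entry_le_norm _ i l
  have hsummA : ∀ i l, Summable fun k => (A ^ k) i l := fun i l =>
    Summable.of_nonneg_of_le (fun k => (hPk k i l).1)
      (fun k => (hPk k i l).2.trans (hPbound k i l)) hnorm
  set S : Matrix (Fin n) (Fin n) ℝ := Matrix.of (fun i l => ∑' k, (A ^ k) i l) with hS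
  have hSapp : ∀ i l, S i l = ∑' k, (A ^ k) i l := fun i l => rfl
  have key : ∀ i l, (A * S) i l = ∑' k, (A ^ (k + 1)) i l := by
    intro i l
    rw [Matrix.mul_apply]
    have h1 : ∀ t : Fin n, A i t * S t l = ∑' k, A i t * (A ^ k) t l := by
      intro t; rw [hSapp]; exact (tsum_mul_left).symm
    rw [Finset.sum_congr rfl fun t _ => h1 t,
      ← Summable.tsum_finsetSum (fun t _ => (hsummA t l).mul_left (A i t))]
    refine tsum_congr fun k => ?_
    rw [pow_succ', Matrix.mul_apply]
  have key2 : ∀ i l, (S * A) i l = ∑' k, (A ^ (k + 1)) i l := by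
    intro i l
    rw [Matrix.mul_apply]
    have h1 : ∀ t : Fin n, S i t * A t l = ∑' k, (A ^ k) i t * A t l := by
      intro t; rw [hSapp]; exact (tsum_mul_right).symm
    rw [Finset.sum_congr rfl fun t _ => h1 t,
      ← Summable.tsum_finsetSum (fun t _ => (hsummA i t).mul_right (A t l))]
    refine tsum_congr fun k => ?_
    rw [pow_succ, Matrix.mul_apply]
  have left : (1 - A) * S = 1 := by
    ext i l
    have : ((1 - A) * S) i l = S i l - (A * S) i l := by
      rw [Matrix.sub_mul, Matrix.one_mul, Matrix.sub_apply]
    rw [this, key i l, hSapp, (hsummA i l).tsum_eq_zero_add]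
    simp [Matrix.one_apply]
  have right : S * (1 - A) = 1 := by
    ext i l
    have : (S * (1 - A)) i l = S i l - (S * A) i l := by
      rw [Matrix.mul_sub, Matrix.mul_one, Matrix.sub_apply]
    rw [this, key2 i l, hSapp, (hsummA i l).tsum_eq_zero_add]
    simp [Matrix.one_apply]
  have hinv : (1 - A)⁻¹ = S := Matrix.inv_eq_right_inv left
  refine ⟨⟨by rw [hinv]; exact left, by rw [hinv]; exact right⟩, ?_⟩
  intro i k
  rw [hinv]
  exact tsum_nonneg fun k' => (hPk k' i k).1

end Neumann

section Amb

variable {n m : ℕ}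

private lemma ambP_nonneg (P : Matrix (Fin n) (Fin n) ℝ) (hP : ∀ i k, 0 ≤ P i k)
    (B : Finset (Fin n)) : ∀ i k, 0 ≤ ambP P B i k := by
  intro i k; by_cases h : i ∈ B <;> simp [ambP, h, hP i k]

private lemma ambP_le (P : Matrix (Fin n) (Fin n) ℝ) (hP : ∀ i k, 0 ≤ P i k)
    (B : Finset (Fin n)) : ∀ i k, ambP P B i k ≤ P i k := by
  intro i k; by_cases h : i ∈ B <;> simp [ambP, h, hP i k]

private lemma ambP_mono (P : Matrix (Fin n) (Fin n) ℝ) (hP : ∀ i k, 0 ≤ P i k)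
    {X Y : Finset (Fin n)} (hXY : X ⊆ Y) : ∀ i k, ambP P Y i k ≤ ambP P X i k := by
  intro i k
  by_cases hx : i ∈ X
  · simp [ambP, hx, hXY hx]
  · by_cases hy : i ∈ Y <;> simp [ambP, hx, hy, hP i k]

private lemma ambP_mulVec_entry (P : Matrix (Fin n) (Fin n) ℝ) (B : Finset (Fin n))
    (v : Fin n → ℝ) (k : Fin n) :
    (ambP P B *ᵥ v) k = if k ∈ B then 0 else ∑ t, P k t * v t := by
  by_cases hk : k ∈ B <;> simp [Matrix.mulVec, dotProduct, ambP, hk]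

/-- Solving the fixed-point equation. -/
private lemma amb_solve (P : Matrix (Fin n) (Fin n) ℝ)
    (hP : ∀ i k, 0 ≤ P i k)
    (hspec : ∀ μ ∈ spectrum ℂ (P.map (algebraMap ℝ ℂ)), ‖μ‖ < 1)
    (B : Finset (Fin n)) (u c : Fin n → ℝ)
    (h : u = ambP P B *ᵥ u + c) : u = (1 - ambP P B)⁻¹ *ᵥ c := by
  obtain ⟨⟨hl, hr⟩, -⟩ :=
    amb_neumann P (ambP P B) hP hspec (ambP_nonneg P hP B) (ambP_le P hP B)
  have h2 : u - ambP P B *ᵥ u = c := sub_eq_of_eq_add' h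
  calc u = 1 *ᵥ u := (Matrix.one_mulVec u).symm
    _ = ((1 - ambP P B)⁻¹ * (1 - ambP P B)) *ᵥ u := by rw [hr]
    _ = (1 - ambP P B)⁻¹ *ᵥ ((1 - ambP P B) *ᵥ u) := (Matrix.mulVec_mulVec u _ _).symm
    _ = (1 - ambP P B)⁻¹ *ᵥ c := by rw [Matrix.sub_mulVec, Matrix.one_mulVec, h2]

private lemma amb_fixed (P : Matrix (Fin n) (Fin n) ℝ)
    (hP : ∀ i k, 0 ≤ P i k)
    (hspec : ∀ μ ∈ spectrum ℂ (P.map (algebraMap ℝ ℂ)), ‖μ‖ < 1)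
    (q : Fin n → Fin m → ℝ) (j : Fin m) (B : Finset (Fin n)) :
    (1 - ambP P B)⁻¹ *ᵥ ambQ q j B
      = ambP P B *ᵥ ((1 - ambP P B)⁻¹ *ᵥ ambQ q j B) + ambQ q j B := by
  obtain ⟨⟨hl, hr⟩, -⟩ :=
    amb_neumann P (ambP P B) hP hspec (ambP_nonneg P hP B) (ambP_le P hP B)
  have h : (1 - ambP P B) *ᵥ ((1 - ambP P B)⁻¹ *ᵥ ambQ q j B) = ambQ q j B := by
    rw [Matrix.mulVec_mulVec, hl, Matrix.one_mulVec]
  rw [Matrix.sub_mulVec, Matrix.one_mulVec] at h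
  exact eq_add_of_sub_eq' h

/-- Entry form of the fixed point equation, for `k ∉ B`. -/
private lemma amb_fixed_entry (P : Matrix (Fin n) (Fin n) ℝ)
    (hP : ∀ i k, 0 ≤ P i k)
    (hspec : ∀ μ ∈ spectrum ℂ (P.map (algebraMap ℝ ℂ)), ‖μ‖ < 1)
    (q : Fin n → Fin m → ℝ) (j : Fin m) (B : Finset (Fin n)) {k : Fin n} (hk : k ∉ B) :
    ((1 - ambP P B)⁻¹ *ᵥ ambQ q j B) k
      = (∑ t, P k t * ((1 - ambP P B)⁻¹ *ᵥ ambQ q j B) t) + q k j := by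
  have h := congrFun (amb_fixed P hP hspec q j B) k
  rw [Pi.add_apply, ambP_mulVec_entry, if_neg hk] at h
  rw [h]; simp [ambQ, hk]

/-- Ambassadors have share 1. -/
private lemma amb_one (P : Matrix (Fin n) (Fin n) ℝ)
    (hP : ∀ i k, 0 ≤ P i k)
    (hspec : ∀ μ ∈ spectrum ℂ (P.map (algebraMap ℝ ℂ)), ‖μ‖ < 1)
    (q : Fin n → Fin m → ℝ) (j : Fin m) (B : Finset (Fin n)) {k : Fin n} (hk : k ∈ B) :
    ((1 - ambP P B)⁻¹ *ᵥ ambQ q j B) k = 1 := by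
  have h := congrFun (amb_fixed P hP hspec q j B) k
  rw [Pi.add_apply, ambP_mulVec_entry, if_pos hk] at h
  rw [h]; simp [ambQ, hk]

private lemma amb_x_nonneg (P : Matrix (Fin n) (Fin n) ℝ)
    (hP : ∀ i k, 0 ≤ P i k)
    (hspec : ∀ μ ∈ spectrum ℂ (P.map (algebraMap ℝ ℂ)), ‖μ‖ < 1)
    (q : Fin n → Fin m → ℝ) (hq : ∀ i l, 0 ≤ q i l) (j : Fin m) (B : Finset (Fin n))
    (i : Fin n) : 0 ≤ ((1 - ambP P B)⁻¹ *ᵥ ambQ q j B) i := by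
  obtain ⟨-, hM0⟩ :=
    amb_neumann P (ambP P B) hP hspec (ambP_nonneg P hP B) (ambP_le P hP B)
  simp only [Matrix.mulVec, dotProduct]
  refine Finset.sum_nonneg fun t _ => mul_nonneg (hM0 i t) ?_
  by_cases ht : t ∈ B <;> simp [ambQ, ht, hq t j]

private lemma amb_x_le_one (P : Matrix (Fin n) (Fin n) ℝ)
    (hP : ∀ i k, 0 ≤ P i k)
    (hspec : ∀ μ ∈ spectrum ℂ (P.map (algebraMap ℝ ℂ)), ‖μ‖ < 1)
    (q : Fin n → Fin m → ℝ) (hq : ∀ i l, 0 ≤ q i l)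
    (hrow : ∀ i, (∑ k, P i k) + (∑ l, q i l) = 1)
    (j : Fin m) (B : Finset (Fin n))
    (i : Fin n) : ((1 - ambP P B)⁻¹ *ᵥ ambQ q j B) i ≤ 1 := by
  obtain ⟨-, hM0⟩ :=
    amb_neumann P (ambP P B) hP hspec (ambP_nonneg P hP B) (ambP_le P hP B)
  set x := (1 - ambP P B)⁻¹ *ᵥ ambQ q j B with hx
  set u : Fin n → ℝ := fun k => 1 - x k with hu
  set c : Fin n → ℝ := fun k => if k ∈ B then 0 else (∑ l, q k l) - q k j with hc
  have hc0 : ∀ k, 0 ≤ c k := by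
    intro k
    by_cases hk : k ∈ B
    · simp [hc, hk]
    · simp only [hc, if_neg hk, sub_nonneg]
      exact Finset.single_le_sum (fun l _ => hq k l) (Finset.mem_univ j)
  have hueq : u = ambP P B *ᵥ u + c := by
    funext k
    rw [Pi.add_apply, ambP_mulVec_entry]
    by_cases hk : k ∈ B
    · rw [if_pos hk]
      have h1 : x k = 1 := amb_one P hP hspec q j B hk
      simp [hu, hc, hk, h1]
    · rw [if_neg hk]
      have hfix : x k = (∑ t, P k t * x t) + q k j :=
        amb_fixed_entry P hP hspec q j B hk
      have hsum : ∑ t, P k t * u t = (∑ t, P k t) - ∑ t, P k t * x t := by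
        rw [← Finset.sum_sub_distrib]
        refine Finset.sum_congr rfl fun t _ => ?_
        simp only [hu]; ring
      have hr := hrow k
      show u k = (∑ t, P k t * u t) + c k
      rw [hsum]
      simp only [hu, hc, if_neg hk]
      linarith
  have husol := amb_solve P hP hspec B u c hueq
  have : 0 ≤ u i := by
    rw [husol]
    simp only [Matrix.mulVec, dotProduct]
    exact Finset.sum_nonneg fun t _ => mul_nonneg (hM0 i t) (hc0 t)
  simpa [hu] using this

private lemma amb_x_mono (P : Matrix (Fin n) (Fin n) ℝ)
    (hP : ∀ i k, 0 ≤ P i k)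
    (hspec : ∀ μ ∈ spectrum ℂ (P.map (algebraMap ℝ ℂ)), ‖μ‖ < 1)
    (q : Fin n → Fin m → ℝ) (hq : ∀ i l, 0 ≤ q i l)
    (hrow : ∀ i, (∑ k, P i k) + (∑ l, q i l) = 1)
    (j : Fin m) {X Y : Finset (Fin n)} (hXY : X ⊆ Y) (i : Fin n) :
    ((1 - ambP P X)⁻¹ *ᵥ ambQ q j X) i ≤ ((1 - ambP P Y)⁻¹ *ᵥ ambQ q j Y) i := by
  obtain ⟨-, hM0⟩ :=
    amb_neumann P (ambP P Y) hP hspec (ambP_nonneg P hP Y) (ambP_le P hP Y)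
  set xX := (1 - ambP P X)⁻¹ *ᵥ ambQ q j X with hxX
  set xY := (1 - ambP P Y)⁻¹ *ᵥ ambQ q j Y with hxY
  set d : Fin n → ℝ := fun k => xY k - xX k with hd
  set c : Fin n → ℝ := fun k => if k ∈ Y then 1 - xX k else 0 with hc
  have hc0 : ∀ k, 0 ≤ c k := by
    intro k
    by_cases hk : k ∈ Y
    · simp only [hc, if_pos hk, sub_nonneg]
      exact amb_x_le_one P hP hspec q hq hrow j X k
    · simp [hc, hk]
  have hdeq : d = ambP P Y *ᵥ d + c := by
    funext k
    rw [Pi.add_apply, ambP_mulVec_entry]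
    by_cases hk : k ∈ Y
    · rw [if_pos hk]
      have h1 : xY k = 1 := amb_one P hP hspec q j Y hk
      simp [hd, hc, hk, h1]
    · rw [if_neg hk]
      have hkX : k ∉ X := fun h => hk (hXY h)
      have h1 : xY k = (∑ t, P k t * xY t) + q k j :=
        amb_fixed_entry P hP hspec q j Y hk
      have h2 : xX k = (∑ t, P k t * xX t) + q k j :=
        amb_fixed_entry P hP hspec q j X hkX
      have hsplit : ∑ t, P k t * (xY t - xX t)
          = (∑ t, P k t * xY t) - ∑ t, P k t * xX t := by
        rw [← Finset.sum_sub_distrib]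
        exact Finset.sum_congr rfl fun t _ => by ring
      show d k = (∑ t, P k t * d t) + c k
      simp only [hd, hc, if_neg hk]
      rw [hsplit]
      linarith
  have hdsol := amb_solve P hP hspec Y d c hdeq
  have : 0 ≤ d i := by
    rw [hdsol]
    simp only [Matrix.mulVec, dotProduct]
    exact Finset.sum_nonneg fun t _ => mul_nonneg (hM0 i t) (hc0 t)
  simpa [hd] using this

private lemma amb_diff (P : Matrix (Fin n) (Fin n) ℝ)
    (hP : ∀ i k, 0 ≤ P i k)
    (hspec : ∀ μ ∈ spectrum ℂ (P.map (algebraMap ℝ ℂ)), ‖μ‖ < 1)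
    (q : Fin n → Fin m → ℝ) (j : Fin m) (B : Finset (Fin n)) {a : Fin n} (ha : a ∉ B)
    (i : Fin n) :
    ((1 - ambP P (insert a B))⁻¹ *ᵥ ambQ q j (insert a B)) i
        - ((1 - ambP P B)⁻¹ *ᵥ ambQ q j B) i
      = (1 - ambP P (insert a B))⁻¹ i a
          * (1 - ((1 - ambP P B)⁻¹ *ᵥ ambQ q j B) a) := by
  set xB := (1 - ambP P B)⁻¹ *ᵥ ambQ q j B with hxB
  set xA := (1 - ambP P (insert a B))⁻¹ *ᵥ ambQ q j (insert a B) with hxA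
  set d : Fin n → ℝ := fun k => xA k - xB k with hd
  set c : Fin n → ℝ := fun k => if k = a then 1 - xB a else 0 with hc
  have hdeq : d = ambP P (insert a B) *ᵥ d + c := by
    funext k
    rw [Pi.add_apply, ambP_mulVec_entry]
    by_cases hk : k ∈ insert a B
    · rw [if_pos hk]
      rcases Finset.mem_insert.1 hk with rfl | hkB
      · have hA1 : xA k = 1 := amb_one P hP hspec q j (insert k B) hk
        simp [hd, hc, hA1]
      · have hka : k ≠ a := fun h => ha (h ▸ hkB)
        have hA1 : xA k = 1 := amb_one P hP hspec q j (insert a B) hk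
        have hB1 : xB k = 1 := amb_one P hP hspec q j B hkB
        simp [hd, hc, hka, hA1, hB1]
    · rw [if_neg hk]
      have hkB : k ∉ B := fun h => hk (Finset.mem_insert_of_mem h)
      have hka : k ≠ a := fun h => hk (h ▸ Finset.mem_insert_self a B)
      have h1 : xA k = (∑ t, P k t * xA t) + q k j :=
        amb_fixed_entry P hP hspec q j (insert a B) hk
      have h2 : xB k = (∑ t, P k t * xB t) + q k j :=
        amb_fixed_entry P hP hspec q j B hkB
      have hsplit : ∑ t, P k t * (xA t - xB t)
          = (∑ t, P k t * xA t) - ∑ t, P k t * xB t := by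
        rw [← Finset.sum_sub_distrib]
        exact Finset.sum_congr rfl fun t _ => by ring
      show d k = (∑ t, P k t * d t) + c k
      simp only [hd, hc, if_neg hka]
      rw [hsplit]
      linarith
  have hdsol := amb_solve P hP hspec (insert a B) d c hdeq
  have := congrFun hdsol i
  rw [Matrix.mulVec, dotProduct] at this
  simp only [hc, mul_ite, mul_zero] at this
  rw [Finset.sum_ite_eq' Finset.univ a
    (fun t => (1 - ambP P (insert a B))⁻¹ i t * (1 - xB a))] at this
  simpa [hd] using this

private lemma amb_inv_mono (P : Matrix (Fin n) (Fin n) ℝ)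
    (hP : ∀ i k, 0 ≤ P i k)
    (hspec : ∀ μ ∈ spectrum ℂ (P.map (algebraMap ℝ ℂ)), ‖μ‖ < 1)
    {X Y : Finset (Fin n)} (hXY : X ⊆ Y) (i k : Fin n) :
    (1 - ambP P Y)⁻¹ i k ≤ (1 - ambP P X)⁻¹ i k := by
  obtain ⟨⟨hXl, hXr⟩, hX0⟩ :=
    amb_neumann P (ambP P X) hP hspec (ambP_nonneg P hP X) (ambP_le P hP X)
  obtain ⟨⟨hYl, hYr⟩, hY0⟩ :=
    amb_neumann P (ambP P Y) hP hspec (ambP_nonneg P hP Y) (ambP_le P hP Y)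
  set AX := ambP P X
  set AY := ambP P Y
  set MX := (1 - AX)⁻¹
  set MY := (1 - AY)⁻¹
  have hid : MX - MY = MX * (AX - AY) * MY := by
    have h1 : MX * ((1 - AY) * MY) = MX := by rw [hYl, mul_one]
    have h2 : MX * (1 - AX) * MY = MY := by rw [hXr, one_mul]
    have h3 : (1 - AY) - (1 - AX) = AX - AY := by abel
    calc MX - MY = MX * (1 - AY) * MY - MX * (1 - AX) * MY := by
          rw [mul_assoc MX (1 - AY) MY, h1, h2]
      _ = MX * ((1 - AY) - (1 - AX)) * MY := by
          rw [Matrix.mul_sub MX (1 - AY) (1 - AX), Matrix.sub_mul]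
      _ = MX * (AX - AY) * MY := by rw [h3]
  have hkey : 0 ≤ (MX - MY) i k := by
    rw [hid, Matrix.mul_apply]
    refine Finset.sum_nonneg fun s _ => mul_nonneg ?_ (hY0 s k)
    rw [Matrix.mul_apply]
    refine Finset.sum_nonneg fun t _ => mul_nonneg (hX0 i t) ?_
    rw [Matrix.sub_apply, sub_nonneg]
    exact ambP_mono P hP hXY t s
  rw [Matrix.sub_apply, sub_nonneg] at hkey
  exact hkey

end Amb

/-- The choice share `B ↦ π_j^w(B)` of the brand ambassador
problem is submodular: for `X ⊆ Y` and `a ∉ Y`,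
`π_j^w(X∪{a}) - π_j^w(X) ≥ π_j^w(Y∪{a}) - π_j^w(Y)`. -/
theorem ambassador_share_submodular {n m : ℕ}
    (P : Matrix (Fin n) (Fin n) ℝ) (q : Fin n → Fin m → ℝ) (j : Fin m)
    (w : Fin n → ℝ)
    (hP : ∀ i k, 0 ≤ P i k) (hdiag : ∀ i, P i i = 0)
    (hq : ∀ i l, 0 ≤ q i l)
    (hrow : ∀ i, (∑ k, P i k) + (∑ l, q i l) = 1)
    (hspec : ∀ μ ∈ spectrum ℂ (P.map (algebraMap ℝ ℂ)), ‖μ‖ < 1)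
    (hw : ∀ i, 0 ≤ w i)
    (X Y : Finset (Fin n)) (hXY : X ⊆ Y) (a : Fin n) (ha : a ∉ Y) :
    ambShare w P q j (insert a Y) - ambShare w P q j Y ≤
      ambShare w P q j (insert a X) - ambShare w P q j X := by
  have haX : a ∉ X := fun h => ha (hXY h)
  obtain ⟨-, hMX0⟩ := amb_neumann P (ambP P (insert a X)) hP hspec
    (ambP_nonneg P hP _) (ambP_le P hP _)
  simp only [ambShare, dotProduct]
  rw [← Finset.sum_sub_distrib, ← Finset.sum_sub_distrib]
  refine Finset.sum_le_sum fun i _ => ?_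
  rw [← mul_sub, ← mul_sub]
  refine mul_le_mul_of_nonneg_left ?_ (hw i)
  rw [amb_diff P hP hspec q j Y ha i, amb_diff P hP hspec q j X haX i]
  refine mul_le_mul (amb_inv_mono P hP hspec (Finset.insert_subset_insert a hXY) i a)
    (sub_le_sub_left (amb_x_mono P hP hspec q hq hrow j hXY a) 1)
    (sub_nonneg.2 (amb_x_le_one P hP hspec q hq hrow j Y a)) (hMX0 i a)
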